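/- arXiv:1705.05357 — 3 statements merged into one kernel-verified Lean document; each statement's English description precedes it below -/
import Mathlib

section
/- Let n ≥ 3 be odd. The set of full-rank subgroups X of the weight lattice Λ of SL(n+1) such that X contains σ_1, …, σ_{n−1} and the family {α_1^∨|_X, α_3^∨|_X, …, α_n^∨|_X} is part of a ℤ-basis of X^* is finite, of cardinality σ((n+1)/2), the sum of all positive divisors of (n+1)/2. -/
/-- The fundamental weights `ω_1, …, ω_n` of `SL(n+1)` in the weight lattice
`Λ = ℤⁿ`: `ω_j` is the `j`-th standard basis vector for `1 ≤ j ≤ n`, and by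
convention `ω_0 = ω_{n+1} = 0`. -/
def w (n : ℕ) (j : ℕ) : Fin n → ℤ := fun i => if (i : ℕ) + 1 = j then 1 else 0

/-- The simple roots of `SL(n+1)`: `α_i = 2ω_i − ω_{i−1} − ω_{i+1}` for `1 ≤ i ≤ n`. -/
def sroot (n : ℕ) (i : ℕ) : Fin n → ℤ := 2 • w n i - w n (i - 1) - w n (i + 1)

/-- `σ_i = α_i + α_{i+1}` for `1 ≤ i ≤ n−1`. -/
def sig (n : ℕ) (i : ℕ) : Fin n → ℤ := sroot n i + sroot n (i + 1)

/-- `ℤS⁺`, the subgroup of `Λ` generated by `σ_1, …, σ_{n−1}`. -/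
def ZSplus (n : ℕ) : Submodule ℤ (Fin n → ℤ) :=
  Submodule.span ℤ (sig n '' Set.Icc 1 (n - 1))

/-- A family of elements of a `ℤ`-module is *part of a basis* if it can be extended
to (i.e. realized injectively inside) a `ℤ`-basis. -/
def IsPartOfBasis {M : Type} [AddCommGroup M] [Module ℤ M] {ι : Type} (v : ι → M) : Prop :=
  ∃ (κ : Type) (b : Module.Basis κ ℤ M) (f : ι → κ), Function.Injective f ∧ ∀ i, b (f i) = v i

/-- The family of restrictions to `X` of the coroots with odd index
`α_1^∨, α_3^∨, …`, where `α_i^∨` is the `i`-th coordinate functional on `Λ = ℤⁿ`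
(i.e. `⟨α_i^∨, ω_j⟩ = δ_{ij}`), viewed as elements of `X^* = Hom_ℤ(X, ℤ)`.
The odd indices `1, 3, …` in `{1, …, n}` are enumerated by `j ↦ 2j+1`. -/
def oddCoroots (n : ℕ) (X : Submodule ℤ (Fin n → ℤ)) :
    Fin ((n + 1) / 2) → (X →ₗ[ℤ] ℤ) := fun j =>
  (LinearMap.proj (R := ℤ) (φ := fun _ : Fin n => ℤ)
    ⟨2 * (j : ℕ), by have := j.isLt; omega⟩).domRestrict X

set_option maxHeartbeats 1000000
set_option synthInstance.maxHeartbeats 1000000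

def dotL (n : ℕ) (c : Fin n → ℤ) : (Fin n → ℤ) →ₗ[ℤ] ℤ where
  toFun x := ∑ i, c i * x i
  map_add' x y := by simp [mul_add, Finset.sum_add_distrib]
  map_smul' a x := by
    simp only [Pi.smul_apply, smul_eq_mul, RingHom.id_apply, Finset.mul_sum]
    exact Finset.sum_congr rfl fun i _ => by ring

lemma dotL_single (n : ℕ) (c : Fin n → ℤ) (i : Fin n) (a : ℤ) :
    dotL n c (Pi.single i a) = c i * a := by
  simp only [dotL, LinearMap.coe_mk, AddHom.coe_mk]
  rw [Finset.sum_eq_single i]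
  · simp
  · intro b _ hb; simp [Pi.single_apply, hb]
  · simp

lemma w_eq_single (n : ℕ) (j : ℕ) (h1 : 1 ≤ j) (h2 : j ≤ n) :
    w n j = Pi.single (⟨j - 1, by omega⟩ : Fin n) 1 := by
  funext i
  simp only [w, Pi.single_apply]
  by_cases h : (i : ℕ) + 1 = j
  · rw [if_pos h, if_pos]
    exact Fin.ext (by simp only [Fin.val_mk]; omega)
  · rw [if_neg h, if_neg]
    intro hc
    have : (i : ℕ) = j - 1 := by rw [hc]
    omega

lemma w_eq_zero (n : ℕ) (j : ℕ) (h : j = 0 ∨ n < j) : w n j = 0 := by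
  funext i
  simp only [w, Pi.zero_apply, ite_eq_right_iff]
  intro hc; exfalso; have := i.isLt; omega

lemma dotL_w (n : ℕ) (c : Fin n → ℤ) (j : ℕ) :
    dotL n c (w n j) = if h : 1 ≤ j ∧ j ≤ n then c ⟨j - 1, by omega⟩ else 0 := by
  split_ifs with h
  · rw [w_eq_single n j h.1 h.2, dotL_single, mul_one]
  · rw [w_eq_zero n j (by omega), map_zero]

lemma sig_eq (n : ℕ) (i : ℕ) (hi : 1 ≤ i) :
    sig n i = w n i + w n (i + 1) - w n (i - 1) - w n (i + 2) := by
  simp only [sig, sroot, two_smul]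
  have : i + 1 - 1 = i := by omega
  rw [this]
  abel


/-- extended coefficients for `s` (1-based index). -/
def Cs (n j : ℕ) : ℤ := if 1 ≤ j ∧ j ≤ n ∧ j % 2 = 1 then 1 else 0
/-- extended coefficients for `t` (1-based index). -/
def Ct (n j : ℕ) : ℤ := if 1 ≤ j ∧ j ≤ n then ((j / 2 : ℕ) : ℤ) else 0

def sL (n : ℕ) : (Fin n → ℤ) →ₗ[ℤ] ℤ := dotL n (fun i => Cs n ((i : ℕ) + 1))
def tL (n : ℕ) : (Fin n → ℤ) →ₗ[ℤ] ℤ := dotL n (fun i => Ct n ((i : ℕ) + 1))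

lemma sL_w (n j : ℕ) : sL n (w n j) = Cs n j := by
  rw [sL, dotL_w]
  split_ifs with h
  · simp only [Cs]; split_ifs with h1 h2 <;> omega
  · rw [Cs, if_neg (by omega)]

lemma tL_w (n j : ℕ) : tL n (w n j) = Ct n j := by
  rw [tL, dotL_w]
  split_ifs with h
  · simp only [Ct]
    rw [if_pos (by omega), if_pos h]
    congr 1
    omega
  · rw [Ct, if_neg (by omega)]

lemma sL_sig (n i : ℕ) (h1 : 1 ≤ i) (h2 : i ≤ n - 1) (hn : 3 ≤ n) (hodd : n % 2 = 1) : sL n (sig n i) = 0 := by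
  rw [sig_eq n i h1]
  simp only [map_sub, map_add, sL_w]
  simp only [Cs]
  split_ifs <;> omega

lemma tL_sig (n i : ℕ) (h1 : 1 ≤ i) (h2 : i ≤ n - 1) (hn : 3 ≤ n) (hodd : n % 2 = 1) :
    tL n (sig n i) = if i = n - 1 then ((n + 1) / 2 : ℕ) else 0 := by
  rw [sig_eq n i h1]
  simp only [map_sub, map_add, tL_w]
  simp only [Ct]
  split_ifs <;> omega

lemma sig_mem (n i : ℕ) (h1 : 1 ≤ i) (h2 : i ≤ n - 1) : sig n i ∈ ZSplus n :=
  Submodule.subset_span ⟨i, ⟨h1, h2⟩, rfl⟩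

lemma Cs_rec (n i : ℕ) (h1 : 1 ≤ i) (h2 : i ≤ n - 2) (hn : 3 ≤ n) :
    Cs n (i + 2) = Cs n i + Cs n (i + 1) - Cs n (i - 1) := by
  simp only [Cs]; split_ifs <;> omega

lemma Ct_rec (n i : ℕ) (h1 : 1 ≤ i) (h2 : i ≤ n - 2) (hn : 3 ≤ n) :
    Ct n (i + 2) = Ct n i + Ct n (i + 1) - Ct n (i - 1) := by
  simp only [Ct]; split_ifs <;> omega

lemma u_mem (n : ℕ) (hn : 3 ≤ n) :
    ∀ j, w n j - Cs n j • w n 1 - Ct n j • w n 2 ∈ ZSplus n := by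
  intro j
  induction j using Nat.strong_induction_on with
  | _ j ih =>
    rcases Nat.lt_or_ge j 3 with hj | hj
    · interval_cases j
      · have h0 : Cs n 0 = 0 := by simp [Cs]
        have h0' : Ct n 0 = 0 := by simp [Ct]
        rw [w_eq_zero n 0 (Or.inl rfl), h0, h0']
        simpa using Submodule.zero_mem _
      · have h0 : Cs n 1 = 1 := by
          rw [Cs, if_pos (show 1 ≤ 1 ∧ 1 ≤ n ∧ 1 % 2 = 1 by omega)]
        have h0' : Ct n 1 = 0 := by
          rw [Ct, if_pos (show 1 ≤ 1 ∧ 1 ≤ n by omega)]; norm_num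
        rw [h0, h0', one_smul, zero_smul]
        simpa using Submodule.zero_mem _
      · have h0 : Cs n 2 = 0 := by
          rw [Cs, if_neg (by omega)]
        have h0' : Ct n 2 = 1 := by
          rw [Ct, if_pos (show 1 ≤ 2 ∧ 2 ≤ n by omega)]; norm_num
        rw [h0, h0', one_smul, zero_smul]
        simpa using Submodule.zero_mem _
    · rcases Nat.lt_or_ge n j with hjn | hjn
      · -- out of range : the vector is 0
        have h0 : Cs n j = 0 := by
          rw [Cs, if_neg (by omega)]
        have h0' : Ct n j = 0 := by
          rw [Ct, if_neg (by omega)]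
        rw [w_eq_zero n j (Or.inr hjn), h0, h0']
        simpa using Submodule.zero_mem _
      · -- recurrence with i = j - 2
        obtain ⟨i, rfl⟩ : ∃ i, j = i + 2 := ⟨j - 2, by omega⟩
        have h1 : 1 ≤ i := by omega
        have h2 : i ≤ n - 2 := by omega
        have key : w n (i + 2) - Cs n (i + 2) • w n 1 - Ct n (i + 2) • w n 2 =
            (-1 : ℤ) • sig n i
            + ((w n i - Cs n i • w n 1 - Ct n i • w n 2)
              + (w n (i+1) - Cs n (i+1) • w n 1 - Ct n (i+1) • w n 2)
              - (w n (i-1) - Cs n (i-1) • w n 1 - Ct n (i-1) • w n 2)) := by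
          rw [Cs_rec n i h1 h2 hn, Ct_rec n i h1 h2 hn, sig_eq n i h1]
          funext p
          simp only [Pi.add_apply, Pi.sub_apply, Pi.smul_apply, Pi.neg_apply, smul_eq_mul]
          ring
        rw [key]
        refine Submodule.add_mem _ (Submodule.smul_mem _ _ (sig_mem n i h1 (by omega))) ?_
        refine Submodule.sub_mem _ (Submodule.add_mem _ ?_ ?_) ?_
        · exact ih i (by omega)
        · exact ih (i+1) (by omega)
        · exact ih (i-1) (by omega)

lemma sL_apply (n : ℕ) (x : Fin n → ℤ) : sL n x = ∑ i, x i * Cs n ((i:ℕ)+1) := by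
  simp only [sL, dotL, LinearMap.coe_mk, AddHom.coe_mk]
  exact Finset.sum_congr rfl fun i _ => mul_comm _ _

lemma tL_apply (n : ℕ) (x : Fin n → ℤ) : tL n x = ∑ i, x i * Ct n ((i:ℕ)+1) := by
  simp only [tL, dotL, LinearMap.coe_mk, AddHom.coe_mk]
  exact Finset.sum_congr rfl fun i _ => mul_comm _ _

lemma reduce_mem (n : ℕ) (hn : 3 ≤ n) (x : Fin n → ℤ) :
    x - sL n x • w n 1 - tL n x • w n 2 ∈ ZSplus n := by
  have hx : x - sL n x • w n 1 - tL n x • w n 2 =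
      ∑ i : Fin n, x i • (w n ((i:ℕ)+1) - Cs n ((i:ℕ)+1) • w n 1 - Ct n ((i:ℕ)+1) • w n 2) := by
    have hw : ∀ i : Fin n, w n ((i:ℕ)+1) = Pi.single i (1:ℤ) := by
      intro i
      rw [w_eq_single n _ (by omega) (by omega)]
      congr 1
    simp only [smul_sub, smul_smul]
    rw [Finset.sum_sub_distrib, Finset.sum_sub_distrib, ← Finset.sum_smul, ← Finset.sum_smul]
    have hxx : ∑ i : Fin n, x i • w n ((i:ℕ)+1) = x := by
      simp_rw [hw]
      have h : ∀ i : Fin n, x i • (Pi.single i (1:ℤ) : Fin n → ℤ)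
          = (Pi.single i (x i) : Fin n → ℤ) := by
        intro i; funext j; simp [Pi.single_apply]
      simp_rw [h]
      exact Finset.univ_sum_single x
    rw [hxx, sL_apply, tL_apply]
  rw [hx]
  exact Submodule.sum_mem _ fun i _ => Submodule.smul_mem _ _ (u_mem n hn ((i:ℕ)+1))

section dual
variable {n k : ℕ} (X : Submodule ℤ (Fin n → ℤ))

lemma surjective_of_isPartOfBasis (f : Fin k → (X →ₗ[ℤ] ℤ))
    (h : IsPartOfBasis f) : Function.Surjective (LinearMap.pi f) := by
  obtain ⟨κ, b, g, hg, hbg⟩ := h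
  intro y
  let G : κ → ℤ := Function.extend g y 0
  let φ : Module.Dual ℤ (Module.Dual ℤ X) := b.constr ℤ G
  refine ⟨(Module.evalEquiv ℤ X).symm φ, ?_⟩
  funext j
  rw [LinearMap.pi_apply]
  have h1 : f j ((Module.evalEquiv ℤ X).symm φ) = φ (f j) := by
    rw [← Module.apply_evalEquiv_symm_apply]
  rw [h1, ← hbg j]
  show (b.constr ℤ G) (b (g j)) = y j
  rw [b.constr_basis]
  exact hg.extend_apply y 0 j

lemma isPartOfBasis_of_surjective (f : Fin k → (X →ₗ[ℤ] ℤ))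
    (hs : Function.Surjective (LinearMap.pi f)) : IsPartOfBasis f := by
  classical
  set p : X →ₗ[ℤ] (Fin k → ℤ) := LinearMap.pi f with hp
  -- a right inverse of p
  let q : (Fin k → ℤ) →ₗ[ℤ] X :=
    (Pi.basisFun ℤ (Fin k)).constr ℤ (fun j => Classical.choose (hs (Pi.single j 1)))
  have hq : ∀ y, p (q y) = y := by
    have h : p.comp q = LinearMap.id := by
      apply (Pi.basisFun ℤ (Fin k)).ext
      intro j
      rw [LinearMap.comp_apply, LinearMap.id_apply, (Pi.basisFun ℤ (Fin k)).constr_basis,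
        Pi.basisFun_apply]
      exact Classical.choose_spec (hs (Pi.single j 1))
    intro y
    exact congrArg (fun F => F y) h
  -- the splitting equivalence
  have hker : ∀ x : X, x - q (p x) ∈ LinearMap.ker p := by
    intro x; rw [LinearMap.mem_ker, map_sub, hq, sub_self]
  let F : X →ₗ[ℤ] (LinearMap.ker p × (Fin k → ℤ)) :=
    LinearMap.prod (LinearMap.codRestrict (LinearMap.ker p) (LinearMap.id - q.comp p)
      (fun x => hker x)) p
  let G : (LinearMap.ker p × (Fin k → ℤ)) →ₗ[ℤ] X :=
    (LinearMap.ker p).subtype.comp (LinearMap.fst ℤ _ _) + q.comp (LinearMap.snd ℤ _ _)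
  have hGF : G.comp F = LinearMap.id := by
    apply LinearMap.ext
    intro x
    simp only [G, F, LinearMap.comp_apply, LinearMap.add_apply, LinearMap.fst_apply,
      LinearMap.snd_apply, LinearMap.prod_apply, Pi.prod, Submodule.coe_subtype,
      LinearMap.codRestrict_apply, LinearMap.sub_apply, LinearMap.id_apply]
    exact sub_add_cancel x (q (p x))
  have hFG : F.comp G = LinearMap.id := by
    apply LinearMap.ext
    rintro ⟨z, y⟩
    have hz : p (z : X) = 0 := z.2
    show F ((LinearMap.ker p).subtype z + q y) = (z, y)
    have hpz : p ((z : X) + q y) = y := by rw [map_add, hz, zero_add, hq]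
    apply Prod.ext
    · apply Subtype.ext
      show ((z : X) + q y) - q (p ((z : X) + q y)) = (z : X)
      rw [hpz]
      exact add_sub_cancel_right _ _
    · exact hpz
  let e : (LinearMap.ker p × (Fin k → ℤ)) ≃ₗ[ℤ] X := LinearEquiv.ofLinear G F hGF hFG
  let bk := Module.Free.chooseBasis ℤ (LinearMap.ker p)
  let b : Module.Basis (Module.Free.ChooseBasisIndex ℤ (LinearMap.ker p) ⊕ Fin k) ℤ X :=
    (bk.prod (Pi.basisFun ℤ (Fin k))).map e
  refine ⟨_, b.dualBasis, Sum.inr, Sum.inr_injective, ?_⟩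
  intro j
  apply b.ext
  intro idx
  rw [b.dualBasis_apply_self]
  have hfb : ∀ x : X, f j x = p x j := fun x => rfl
  cases idx with
  | inl κ =>
      rw [if_neg (by simp)]
      have : b (Sum.inl κ) = (bk κ : X) := by
        simp only [b, Module.Basis.map_apply, Module.Basis.prod_apply, e, LinearEquiv.ofLinear_apply]
        simp [G, Sum.elim_inl]
      rw [hfb, this]
      have : p ((bk κ : X)) = 0 := (bk κ).2
      rw [this]
      rfl
  | inr j' =>
      have : b (Sum.inr j') = q (Pi.single j' 1) := by
        simp only [b, Module.Basis.map_apply, Module.Basis.prod_apply, e, LinearEquiv.ofLinear_apply]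
        simp [G, Sum.elim_inr]
      rw [hfb, this, hq]
      simp [Pi.single_apply]
      split_ifs with h1 h2 h2 <;> first | rfl | (exfalso; simp_all) 

end dual

/-! ### The candidate submodules -/

lemma w_apply_mk (n a v : ℕ) (h : v < n) :
    w n a ⟨v, h⟩ = if v + 1 = a then 1 else 0 := rfl

def Xdr (n d r : ℕ) : Submodule ℤ (Fin n → ℤ) where
  carrier := {x | (d : ℤ) ∣ tL n x - (r : ℤ) * sL n x}
  add_mem' := by
    intro a b ha hb
    have h : tL n (a + b) - (r : ℤ) * sL n (a + b)
        = (tL n a - (r : ℤ) * sL n a) + (tL n b - (r : ℤ) * sL n b) := by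
      simp only [map_add]; ring
    show (d : ℤ) ∣ tL n (a + b) - (r : ℤ) * sL n (a + b)
    rw [h]
    exact dvd_add ha hb
  zero_mem' := by simp
  smul_mem' := by
    intro c x hx
    have h : tL n (c • x) - (r : ℤ) * sL n (c • x) = c * (tL n x - (r : ℤ) * sL n x) := by
      simp only [map_smul, smul_eq_mul]; ring
    show (d : ℤ) ∣ tL n (c • x) - (r : ℤ) * sL n (c • x)
    rw [h]
    exact hx.mul_left c

lemma mem_Xdr {n d r : ℕ} {x : Fin n → ℤ} :
    x ∈ Xdr n d r ↔ (d : ℤ) ∣ tL n x - (r : ℤ) * sL n x := Iff.rfl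

lemma sL_w1 (n : ℕ) (hn : 3 ≤ n) : sL n (w n 1) = 1 := by
  rw [sL_w, Cs, if_pos (show 1 ≤ 1 ∧ 1 ≤ n ∧ 1 % 2 = 1 by omega)]
lemma tL_w1 (n : ℕ) (hn : 3 ≤ n) : tL n (w n 1) = 0 := by
  rw [tL_w, Ct, if_pos (show 1 ≤ 1 ∧ 1 ≤ n by omega)]; norm_num
lemma sL_w2 (n : ℕ) (hn : 3 ≤ n) : sL n (w n 2) = 0 := by
  rw [sL_w, Cs, if_neg (by omega)]
lemma tL_w2 (n : ℕ) (hn : 3 ≤ n) : tL n (w n 2) = 1 := by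
  rw [tL_w, Ct, if_pos (show 1 ≤ 2 ∧ 2 ≤ n by omega)]; norm_num
lemma sL_wodd (n : ℕ) (hn : 3 ≤ n) (j : ℕ) (hj : 2 * j + 1 ≤ n) : sL n (w n (2 * j + 1)) = 1 := by
  rw [sL_w, Cs, if_pos (show 1 ≤ 2*j+1 ∧ 2*j+1 ≤ n ∧ (2*j+1) % 2 = 1 by omega)]
lemma tL_wodd (n : ℕ) (hn : 3 ≤ n) (j : ℕ) (hj : 2 * j + 1 ≤ n) :
    tL n (w n (2 * j + 1)) = (j : ℤ) := by
  rw [tL_w, Ct, if_pos (show 1 ≤ 2*j+1 ∧ 2*j+1 ≤ n by omega)]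
  congr 1
  omega

/-- the key test vectors hitting the standard basis under the odd-coordinate projection -/
lemma xv_mem_Xdr (n d r : ℕ) (hn : 3 ≤ n) (j : ℕ) (hj : 2 * j + 1 ≤ n) :
    w n (2 * j + 1) + ((r : ℤ) - (j : ℤ)) • w n 2 ∈ Xdr n d r := by
  rw [mem_Xdr]
  have h1 : tL n (w n (2 * j + 1) + ((r : ℤ) - (j : ℤ)) • w n 2) = (r : ℤ) := by
    rw [map_add, map_smul, tL_wodd n hn j hj, tL_w2 n hn]
    simp only [smul_eq_mul, mul_one]
    ring
  have h2 : sL n (w n (2 * j + 1) + ((r : ℤ) - (j : ℤ)) • w n 2) = 1 := by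
    rw [map_add, map_smul, sL_wodd n hn j hj, sL_w2 n hn]
    simp only [smul_eq_mul, mul_zero, add_zero]
  rw [h1, h2, mul_one, sub_self]
  exact dvd_zero _

lemma sig_mem_Xdr (n d r i : ℕ) (hn : 3 ≤ n) (hodd : n % 2 = 1) (hd : d ∣ (n + 1) / 2)
    (h1 : 1 ≤ i) (h2 : i ≤ n - 1) : sig n i ∈ Xdr n d r := by
  rw [mem_Xdr, sL_sig n i h1 h2 hn hodd, tL_sig n i h1 h2 hn hodd]
  rw [mul_zero, sub_zero]
  split_ifs
  · exact Int.natCast_dvd_natCast.mpr hd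
  · exact dvd_zero _

lemma finrank_Xdr (n d r : ℕ) (hn : 3 ≤ n) (hd0 : 0 < d) :
    Module.finrank ℤ (Xdr n d r) = n := by
  have hfr : Module.finrank ℤ (Fin n → ℤ) = n := by
    simp [Module.finrank_pi]
  have hle : Module.finrank ℤ (Xdr n d r) ≤ n := by
    have h := Submodule.finrank_le (Xdr n d r)
    rwa [hfr] at h
  have hmem : ∀ x : Fin n → ℤ, ((d : ℤ) • (LinearMap.id : (Fin n → ℤ) →ₗ[ℤ] (Fin n → ℤ))) x ∈ Xdr n d r := by
    intro x
    rw [LinearMap.smul_apply, LinearMap.id_apply, mem_Xdr, map_smul, map_smul]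
    have : (d : ℤ) • tL n x - (r : ℤ) * ((d : ℤ) • sL n x)
        = (d : ℤ) * (tL n x - (r : ℤ) * sL n x) := by
      simp only [smul_eq_mul]; ring
    rw [this]
    exact Dvd.intro _ rfl
  have hinj : Function.Injective
      (LinearMap.codRestrict (Xdr n d r) ((d : ℤ) • LinearMap.id) hmem) := by
    intro x y hxy
    have h2 : (d : ℤ) • x = (d : ℤ) • y := congrArg Subtype.val hxy
    exact smul_right_injective _ (by exact_mod_cast hd0.ne') h2
  have hge := LinearMap.finrank_le_finrank_of_injective hinj
  rw [hfr] at hge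
  omega

lemma pi_oddCoroots_surjective (n d r : ℕ) (hn : 3 ≤ n) (hodd : n % 2 = 1) :
    Function.Surjective (LinearMap.pi (oddCoroots n (Xdr n d r))) := by
  intro y
  have hj2 : ∀ j : Fin ((n + 1) / 2), 2 * (j : ℕ) + 1 ≤ n := by
    intro j; have := j.isLt; omega
  let xv : Fin ((n + 1) / 2) → Xdr n d r := fun j =>
    ⟨w n (2 * (j : ℕ) + 1) + ((r : ℤ) - ((j : ℕ) : ℤ)) • w n 2,
      xv_mem_Xdr n d r hn (j : ℕ) (hj2 j)⟩
  refine ⟨∑ j, y j • xv j, ?_⟩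
  funext p
  rw [LinearMap.pi_apply]
  show ((((∑ j, y j • xv j) : Xdr n d r) : Fin n → ℤ)) ⟨2 * (p : ℕ), _⟩ = y p
  have hco : (((∑ j, y j • xv j) : Xdr n d r) : Fin n → ℤ)
      = ∑ j, y j • ((xv j : Fin n → ℤ)) := by
    simp
  rw [hco]
  rw [Finset.sum_apply]
  rw [Finset.sum_eq_single p]
  · simp only [Pi.smul_apply, smul_eq_mul, xv, Pi.add_apply, w_apply_mk]
    rw [if_neg (show ¬(2 * (p : ℕ) + 1 = 2) from by omega)]
    simp
  · intro j _ hj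
    have hjp : (j : ℕ) ≠ (p : ℕ) := fun hc => hj (Fin.ext hc)
    simp only [Pi.smul_apply, smul_eq_mul, xv, Pi.add_apply, w_apply_mk]
    rw [if_neg (show ¬(2 * (p : ℕ) + 1 = 2 * (j : ℕ) + 1) from by omega),
      if_neg (show ¬(2 * (p : ℕ) + 1 = 2) from by omega)]
    simp
  · intro h
    exact absurd (Finset.mem_univ p) h

/-! ### sum over even coordinates -/

lemma sL_eq_sum_even (n : ℕ) (hn : 3 ≤ n) (hodd : n % 2 = 1) (x : Fin n → ℤ) :
    sL n x = ∑ p : Fin ((n + 1) / 2), x ⟨2 * (p : ℕ), by have := p.isLt; omega⟩ := by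
  rw [sL_apply]
  have h1 : ∀ i : Fin n, x i * Cs n ((i : ℕ) + 1) = if (i : ℕ) % 2 = 0 then x i else 0 := by
    intro i
    have hlt := i.isLt
    rw [Cs]
    by_cases hp : (i : ℕ) % 2 = 0
    · rw [if_pos (show 1 ≤ (i:ℕ)+1 ∧ (i:ℕ)+1 ≤ n ∧ ((i:ℕ)+1) % 2 = 1 by omega), if_pos hp,
        mul_one]
    · rw [if_neg (show ¬(1 ≤ (i:ℕ)+1 ∧ (i:ℕ)+1 ≤ n ∧ ((i:ℕ)+1) % 2 = 1) by omega), if_neg hp,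
        mul_zero]
  rw [Finset.sum_congr rfl (fun i _ => h1 i), ← Finset.sum_filter]
  refine Finset.sum_nbij' (fun a => (⟨(a : ℕ) / 2, by have := a.isLt; omega⟩ : Fin ((n+1)/2)))
    (fun b => (⟨2 * (b : ℕ), by have := b.isLt; omega⟩ : Fin n)) ?_ ?_ ?_ ?_ ?_
  · intro a _; exact Finset.mem_univ _
  · intro b _
    simp only [Finset.mem_filter, Finset.mem_univ, true_and]
    omega
  · intro a ha
    simp only [Finset.mem_filter, Finset.mem_univ, true_and] at ha
    exact Fin.ext (by simp only [Fin.val_mk]; omega)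
  · intro b _
    exact Fin.ext (by simp only [Fin.val_mk]; omega)
  · intro a ha
    simp only [Finset.mem_filter, Finset.mem_univ, true_and] at ha
    congr 1
    exact Fin.ext (by simp only [Fin.val_mk]; omega)

/-! ### classification -/

lemma classify (n : ℕ) (hn : 3 ≤ n) (hodd : n % 2 = 1) (X : Submodule ℤ (Fin n → ℤ))
    (hσ : ∀ i ∈ Set.Icc 1 (n - 1), sig n i ∈ X) (hbas : IsPartOfBasis (oddCoroots n X)) :
    ∃ d r : ℕ, d ∣ (n + 1) / 2 ∧ 0 < d ∧ r < d ∧ X = Xdr n d r := by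
  have hZS : ZSplus n ≤ X := by
    rw [ZSplus, Submodule.span_le]
    rintro _ ⟨i, hi, rfl⟩
    exact hσ i hi
  have hsurj := surjective_of_isPartOfBasis X (oddCoroots n X) hbas
  -- the ideal of values of tL on X ∩ ker sL
  set T : Submodule ℤ ℤ := Submodule.map (tL n) (X ⊓ LinearMap.ker (sL n)) with hT
  have hmT : (((n + 1) / 2 : ℕ) : ℤ) ∈ T := by
    refine Submodule.mem_map.mpr ⟨sig n (n - 1), Submodule.mem_inf.mpr
      ⟨hσ (n - 1) ⟨by omega, le_refl _⟩, ?_⟩, ?_⟩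
    · rw [LinearMap.mem_ker, sL_sig n (n - 1) (by omega) (le_refl _) hn hodd]
    · rw [tL_sig n (n - 1) (by omega) (le_refl _) hn hodd, if_pos rfl]
  obtain ⟨g, hg⟩ : Submodule.IsPrincipal T := inferInstance
  have hgmem : ∀ a : ℤ, a ∈ T ↔ g ∣ a := by
    intro a
    rw [hg, Submodule.mem_span_singleton]
    constructor
    · rintro ⟨c, rfl⟩; exact Dvd.intro _ (by rw [smul_eq_mul, mul_comm])
    · rintro ⟨c, rfl⟩; exact ⟨c, by rw [smul_eq_mul, mul_comm]⟩
  set d : ℕ := g.natAbs with hdd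
  have hdmem : ∀ a : ℤ, a ∈ T ↔ (d : ℤ) ∣ a := by
    intro a
    rw [hgmem a, hdd]
    exact ⟨fun h => (Int.natAbs_dvd).mpr h, fun h => (Int.natAbs_dvd).mp h⟩
  have hdvd : (d : ℤ) ∣ ((n + 1) / 2 : ℕ) := by
    have := (hdmem _).mp hmT
    exact_mod_cast this
  have hdm : d ∣ (n + 1) / 2 := Int.natCast_dvd_natCast.mp hdvd
  have hd0 : 0 < d := by
    rcases Nat.eq_zero_or_pos d with h0 | h
    · exfalso
      rw [h0] at hdvd
      norm_num at hdvd
      omega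
    · exact h
  -- an element of X with sL = 1
  obtain ⟨z, hz⟩ := hsurj (Pi.single (⟨0, by omega⟩ : Fin ((n+1)/2)) (1:ℤ))
  set x₀ : Fin n → ℤ := (z : Fin n → ℤ) with hx₀
  have hx₀X : x₀ ∈ X := z.2
  have hx₀s : sL n x₀ = 1 := by
    rw [sL_eq_sum_even n hn hodd]
    have hcoord : ∀ p : Fin ((n + 1) / 2),
        x₀ ⟨2 * (p : ℕ), by have := p.isLt; omega⟩ = (Pi.single (⟨0, by omega⟩ : Fin ((n+1)/2)) (1:ℤ) : Fin ((n+1)/2) → ℤ) p := by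
      intro p
      rw [← hz]
      rfl
    rw [Finset.sum_congr rfl (fun p _ => hcoord p)]
    simp
  -- define r
  set r : ℕ := (tL n x₀ % (d : ℤ)).toNat with hrr
  have hd0' : (0 : ℤ) < (d : ℤ) := by exact_mod_cast hd0
  have hrInt : (r : ℤ) = tL n x₀ % (d : ℤ) := by
    rw [hrr, Int.toNat_of_nonneg (Int.emod_nonneg _ hd0'.ne')]
  have hrd : r < d := by
    have := Int.emod_lt_of_pos (tL n x₀) hd0'
    omega
  have hrdvd : (d : ℤ) ∣ tL n x₀ - (r : ℤ) := by
    rw [hrInt]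
    exact Int.dvd_self_sub_of_emod_eq rfl
  refine ⟨d, r, hdm, hd0, hrd, ?_⟩
  -- key fact: every y with sL y = 0 and d ∣ tL y is in X
  have hkey : ∀ y : Fin n → ℤ, sL n y = 0 → (d : ℤ) ∣ tL n y → y ∈ X := by
    intro y hys hyt
    obtain ⟨c, hc⟩ := hyt
    obtain ⟨zd, hzd, hzdt⟩ := Submodule.mem_map.mp ((hdmem (d : ℤ)).mpr dvd_rfl)
    obtain ⟨hzdX, hzds⟩ := Submodule.mem_inf.mp hzd
    rw [LinearMap.mem_ker] at hzds
    have h0 : sL n (y - c • zd) = 0 := by rw [map_sub, map_smul, hys, hzds]; simp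
    have h1 : tL n (y - c • zd) = 0 := by
      rw [map_sub, map_smul, hzdt, hc, smul_eq_mul]; ring
    have h2 := reduce_mem n hn (y - c • zd)
    rw [h0, h1, zero_smul, zero_smul, sub_zero, sub_zero] at h2
    have h3 : y - c • zd ∈ X := hZS h2
    have h4 : c • zd ∈ X := Submodule.smul_mem _ _ hzdX
    have := Submodule.add_mem _ h3 h4
    simpa using this
  apply le_antisymm
  · -- X ≤ Xdr
    intro x hx
    rw [mem_Xdr]
    have hy : x - sL n x • x₀ ∈ X ⊓ LinearMap.ker (sL n) := by
      refine Submodule.mem_inf.mpr ⟨?_, ?_⟩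
      · exact Submodule.sub_mem _ hx (Submodule.smul_mem _ _ hx₀X)
      · rw [LinearMap.mem_ker, map_sub, map_smul, hx₀s, smul_eq_mul, mul_one, sub_self]
    have hyT : tL n (x - sL n x • x₀) ∈ T := Submodule.mem_map.mpr ⟨_, hy, rfl⟩
    have hdy := (hdmem _).mp hyT
    rw [map_sub, map_smul, smul_eq_mul] at hdy
    -- tL x - r sL x = (tL x - sL x * tL x₀) + sL x * (tL x₀ - r)
    have hsplit : tL n x - (r : ℤ) * sL n x
        = (tL n x - sL n x * tL n x₀) + sL n x * (tL n x₀ - (r : ℤ)) := by ring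
    rw [hsplit]
    exact dvd_add hdy (Dvd.dvd.mul_left hrdvd _)
  · -- Xdr ≤ X
    intro x hx
    rw [mem_Xdr] at hx
    have hy0 : sL n (x - sL n x • x₀) = 0 := by
      rw [map_sub, map_smul, hx₀s, smul_eq_mul, mul_one, sub_self]
    have hyt : (d : ℤ) ∣ tL n (x - sL n x • x₀) := by
      rw [map_sub, map_smul, smul_eq_mul]
      have hsplit : tL n x - sL n x * tL n x₀
          = (tL n x - (r : ℤ) * sL n x) - sL n x * (tL n x₀ - (r : ℤ)) := by ring
      rw [hsplit]
      exact dvd_sub hx (Dvd.dvd.mul_left hrdvd _)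
    have hyX := hkey _ hy0 hyt
    have := Submodule.add_mem _ hyX (Submodule.smul_mem _ (sL n x) hx₀X)
    simpa using this

/-! ### injectivity -/

lemma Xdr_injective (n d d' r r' : ℕ) (hn : 3 ≤ n) (hd0 : 0 < d) (hd0' : 0 < d')
    (hr : r < d) (hr' : r' < d') (h : Xdr n d r = Xdr n d' r') : d = d' ∧ r = r' := by
  have hdvd : ∀ a b : ℕ, 0 < a → Xdr n a 0 ≤ Xdr n b 0 → True := fun _ _ _ _ => trivial
  -- d = d'
  have htest : ∀ (e f : ℕ), ((e : ℤ) • w n 2) ∈ Xdr n e f := by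
    intro e f
    rw [mem_Xdr, map_smul, map_smul, sL_w2 n hn, tL_w2 n hn]
    simp
  have h1 : ((d : ℤ) • w n 2) ∈ Xdr n d' r' := h ▸ htest d r
  rw [mem_Xdr, map_smul, map_smul, sL_w2 n hn, tL_w2 n hn] at h1
  simp only [smul_eq_mul, mul_one, mul_zero, sub_zero] at h1
  have h2 : ((d' : ℤ) • w n 2) ∈ Xdr n d r := h ▸ htest d' r'
  rw [mem_Xdr, map_smul, map_smul, sL_w2 n hn, tL_w2 n hn] at h2
  simp only [smul_eq_mul, mul_one, mul_zero, sub_zero] at h2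
  have hdd : d = d' := by
    have e1 : d' ∣ d := Int.natCast_dvd_natCast.mp (by simpa using h1)
    have e2 : d ∣ d' := Int.natCast_dvd_natCast.mp (by simpa using h2)
    exact Nat.dvd_antisymm e2 e1
  subst hdd
  refine ⟨rfl, ?_⟩
  -- r = r'
  have htest2 : ∀ (f : ℕ), (w n 1 + (f : ℤ) • w n 2) ∈ Xdr n d f := by
    intro f
    rw [mem_Xdr, map_add, map_add, map_smul, map_smul, sL_w1 n hn, tL_w1 n hn, sL_w2 n hn,
      tL_w2 n hn]
    simp
  have h3 : (w n 1 + (r : ℤ) • w n 2) ∈ Xdr n d r' := h ▸ htest2 r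
  rw [mem_Xdr, map_add, map_add, map_smul, map_smul, sL_w1 n hn, tL_w1 n hn, sL_w2 n hn,
    tL_w2 n hn] at h3
  simp only [smul_eq_mul, mul_one, mul_zero, add_zero, zero_add] at h3
  have h4 : ((r : ℤ) - (r' : ℤ)) = 0 := by
    refine Int.eq_zero_of_abs_lt_dvd h3 ?_
    rw [abs_lt]
    constructor <;> [push_cast; push_cast] <;> omega
  omega


/-- For `n ≥ 3` odd, the set of full-rank subgroups `X` of the weight lattice of
`SL(n+1)` containing `σ_1, …, σ_{n−1}` and such that
`{α_1^∨|_X, α_3^∨|_X, …, α_n^∨|_X}` is part of a `ℤ`-basis of `X^*` is finite,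
of cardinality `σ((n+1)/2)`, the sum of all positive divisors of `(n+1)/2`. -/
theorem stmt16 (n : ℕ) (hn : 3 ≤ n) (hno : Odd n) :
    {X : Submodule ℤ (Fin n → ℤ) |
        Module.finrank ℤ X = n ∧ (∀ i ∈ Set.Icc 1 (n - 1), sig n i ∈ X) ∧
          IsPartOfBasis (oddCoroots n X)}.Finite ∧
      {X : Submodule ℤ (Fin n → ℤ) |
        Module.finrank ℤ X = n ∧ (∀ i ∈ Set.Icc 1 (n - 1), sig n i ∈ X) ∧
          IsPartOfBasis (oddCoroots n X)}.ncard
        = ∑ d ∈ Nat.divisors ((n + 1) / 2), d := by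
  have hodd : n % 2 = 1 := Nat.odd_iff.mp hno
  have hm0 : (n + 1) / 2 ≠ 0 := by omega
  set F : ((dp : {d // d ∈ Nat.divisors ((n + 1) / 2)}) × Fin (dp : ℕ)) →
      Submodule ℤ (Fin n → ℤ) := fun p => Xdr n (p.1 : ℕ) (p.2 : ℕ) with hF
  have hset : {X : Submodule ℤ (Fin n → ℤ) |
      Module.finrank ℤ X = n ∧ (∀ i ∈ Set.Icc 1 (n - 1), sig n i ∈ X) ∧
        IsPartOfBasis (oddCoroots n X)} = Set.range F := by
    ext X
    simp only [Set.mem_setOf_eq, Set.mem_range]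
    constructor
    · rintro ⟨hfr, hσ, hbas⟩
      obtain ⟨d, r, hdm, hd0, hrd, rfl⟩ := classify n hn hodd X hσ hbas
      exact ⟨⟨⟨d, Nat.mem_divisors.mpr ⟨hdm, hm0⟩⟩, ⟨r, hrd⟩⟩, rfl⟩
    · rintro ⟨⟨⟨d, hd⟩, r⟩, rfl⟩
      obtain ⟨hdm, -⟩ := Nat.mem_divisors.mp hd
      have hd0 : 0 < d := Nat.pos_of_ne_zero (fun h => hm0 (by rw [h] at hdm; exact Nat.eq_zero_of_zero_dvd hdm))
      exact ⟨finrank_Xdr n d r hn hd0,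
        fun i hi => sig_mem_Xdr n d (r : ℕ) i hn hodd hdm hi.1 hi.2,
        isPartOfBasis_of_surjective _ _ (pi_oddCoroots_surjective n d r hn hodd)⟩
  have hFinj : Function.Injective F := by
    rintro ⟨⟨d, hd⟩, r⟩ ⟨⟨d', hd'⟩, r'⟩ h
    have hd0 : 0 < d := Nat.pos_of_ne_zero (fun h0 => hm0 (by
      have h1 := (Nat.mem_divisors.mp hd).1
      rw [h0] at h1
      exact Nat.eq_zero_of_zero_dvd h1))
    have hd0' : 0 < d' := Nat.pos_of_ne_zero (fun h0 => hm0 (by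
      have h1 := (Nat.mem_divisors.mp hd').1
      rw [h0] at h1
      exact Nat.eq_zero_of_zero_dvd h1))
    obtain ⟨h1, h2⟩ := Xdr_injective n d d' (r : ℕ) (r' : ℕ) hn hd0 hd0' r.isLt r'.isLt h
    subst h1
    have : r = r' := Fin.ext h2
    subst this
    rfl
  constructor
  · rw [hset]
    exact Set.finite_range F
  · rw [hset, ← Set.image_univ, Set.ncard_image_of_injective _ hFinj, Set.ncard_univ,
      Nat.card_eq_fintype_card, Fintype.card_sigma]
    simp only [Fintype.card_fin]
    exact Finset.sum_coe_sort (Nat.divisors ((n + 1) / 2)) (fun d => d)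
end

section
/- Let n ≥ 2 and let X be a full-rank subgroup of the weight lattice Λ of Sp(2n) (type C_n). If ω_k ∈ X for every even k with 2 ≤ k ≤ n, and the family {α_i^∨|_X : 1 ≤ i ≤ n, i odd} of restrictions to X of the coroots with odd index is part of a ℤ-basis of the dual lattice X^* = Hom_ℤ(X, ℤ), then X = Λ. -/
/-- The simple roots of `Sp(2n)` (type `C_n`): `α_i = 2ω_i − ω_{i−1} − ω_{i+1}` for
`1 ≤ i ≤ n−1` and `α_n = 2ω_n − 2ω_{n−1}`. -/
def srootC (n : ℕ) (i : ℕ) : Fin n → ℤ :=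
  if i = n then 2 • w n n - 2 • w n (n - 1)
  else 2 • w n i - w n (i - 1) - w n (i + 1)

/-- `σ_i = α_i + α_{i+1}` for `1 ≤ i ≤ n−1` (type `C_n`). -/
def sigC (n : ℕ) (i : ℕ) : Fin n → ℤ := srootC n i + srootC n (i + 1)

/-- For `n ≥ 2` and a full-rank subgroup `X` of the weight lattice `Λ` of `Sp(2n)`
(type `C_n`): if `ω_k ∈ X` for every even `k` with `2 ≤ k ≤ n`, and the family
`{α_i^∨|_X : 1 ≤ i ≤ n, i odd}` is part of a `ℤ`-basis of `X^* = Hom_ℤ(X, ℤ)`,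
then `X = Λ`. -/
theorem stmt18 (n : ℕ) (hn : 2 ≤ n) (X : Submodule ℤ (Fin n → ℤ))
    (hrank : Module.finrank ℤ X = n)
    (hw : ∀ k : ℕ, 2 ≤ k → k ≤ n → Even k → w n k ∈ X)
    (hb : IsPartOfBasis (oddCoroots n X)) :
    X = ⊤ := by
  classical
  obtain ⟨κ, b, f, hf, hbf⟩ := hb
  -- odd-position standard basis vectors are in X
  have hodd : ∀ i : Fin n, (i : ℕ) % 2 = 1 → Pi.single i (1 : ℤ) ∈ X := by
    intro i hi
    have h1 : w n ((i : ℕ) + 1) ∈ X :=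
      hw _ (by omega) (by omega) ⟨((i : ℕ) + 1) / 2, by omega⟩
    have : w n ((i : ℕ) + 1) = Pi.single i (1 : ℤ) := by
      funext i'
      simp [w, Pi.single_apply, Fin.ext_iff]
    rwa [this] at h1
  -- dual-basis elements
  have key : ∀ j : Fin ((n + 1) / 2), ∃ v : X, ∀ j' : Fin ((n + 1) / 2),
      (v : Fin n → ℤ) ⟨2 * (j' : ℕ), by have := j'.isLt; omega⟩
        = if j' = j then 1 else 0 := by
    intro j
    refine ⟨(Module.evalEquiv ℤ X).symm (b.coord (f j)), fun j' => ?_⟩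
    have h := Module.apply_evalEquiv_symm_apply (R := ℤ) (M := X)
      (f := b (f j')) (g := b.coord (f j))
    have hcoord : b.coord (f j) (b (f j')) = if j' = j then 1 else 0 := by
      rw [Module.Basis.coord_apply, Module.Basis.repr_self, Finsupp.single_apply]
      by_cases hjj : j' = j
      · simp [hjj]
      · rw [if_neg (fun hc => hjj (hf hc)), if_neg hjj]
    rw [hcoord] at h
    rw [hbf j'] at h
    exact h
  -- all standard basis vectors are in X
  have lem : ∀ (i'' : Fin n) (c : ℤ), (Pi.single i'' c : Fin n → ℤ) = c • Pi.single i'' (1 : ℤ) := by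
    intro i'' c
    funext t
    by_cases ht : t = i'' <;> simp [Pi.single_apply, ht]
  have hall : ∀ i : Fin n, Pi.single i (1 : ℤ) ∈ X := by
    intro i
    rcases Nat.even_or_odd (i : ℕ) with he | ho
    · obtain ⟨j, hj⟩ := he
      have hj2 : j < (n + 1) / 2 := by have := i.isLt; omega
      obtain ⟨v, hv⟩ := key ⟨j, hj2⟩
      have hvi : (v : Fin n → ℤ) i = 1 := by
        have := hv ⟨j, hj2⟩
        rw [if_pos rfl] at this
        convert this using 2
        exact Fin.ext (by simp; omega)
      -- the sum of the other coordinates' contributions lies in X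
      have hsum : ∑ i' ∈ Finset.univ.erase i, Pi.single i' ((v : Fin n → ℤ) i') ∈ X := by
        refine Submodule.sum_mem _ fun i' hi' => ?_
        have hne : i' ≠ i := (Finset.mem_erase.mp hi').1
        rcases Nat.even_or_odd (i' : ℕ) with he' | ho'
        · obtain ⟨j', hj'⟩ := he'
          have hj'2 : j' < (n + 1) / 2 := by have := i'.isLt; omega
          have hz : (v : Fin n → ℤ) i' = 0 := by
            have := hv ⟨j', hj'2⟩
            rw [if_neg (by
              intro hc
              apply hne
              have : j' = j := by simpa [Fin.ext_iff] using hc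
              exact Fin.ext (by omega))] at this
            have heq : (⟨2 * j', by omega⟩ : Fin n) = i' := Fin.ext (by simp; omega)
            rwa [heq] at this
          rw [hz, Pi.single_zero]
          exact Submodule.zero_mem _
        · rw [lem i' ((v : Fin n → ℤ) i')]
          obtain ⟨m, hm⟩ := ho'
          exact Submodule.smul_mem _ _ (hodd i' (by omega))
      have hdecomp : Pi.single i (1 : ℤ)
          = (v : Fin n → ℤ) - ∑ i' ∈ Finset.univ.erase i, Pi.single i' ((v : Fin n → ℤ) i') := by
        have h1 : ∑ i' ∈ Finset.univ.erase i, Pi.single i' ((v : Fin n → ℤ) i')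
            + Pi.single i ((v : Fin n → ℤ) i) = ∑ i', Pi.single i' ((v : Fin n → ℤ) i') :=
          Finset.sum_erase_add _ _ (Finset.mem_univ i)
        rw [Finset.univ_sum_single] at h1
        rw [← hvi]
        linear_combination (norm := abel) h1
      rw [hdecomp]
      exact Submodule.sub_mem _ v.2 hsum
    · obtain ⟨m, hm⟩ := ho
      exact hodd i (by omega)
  rw [eq_top_iff]
  intro y _
  have hy : y = ∑ i, (y i) • Pi.single i (1 : ℤ) := by
    conv_lhs => rw [← Finset.univ_sum_single y]
    exact Finset.sum_congr rfl fun i _ => lem i (y i)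
  rw [hy]
  exact Submodule.sum_mem _ fun i _ => Submodule.smul_mem _ _ (hall i)
end

section
/- Let V be a finite-dimensional real inner product space, let f : V → ℝ be a linear functional, and let v_1, …, v_m ∈ V be vectors with f(v_i) > 0 for every i. If the family (v_1, …, v_m) is linearly dependent over ℝ, then there exist indices i ≠ j such that ⟨v_i, v_j⟩ > 0 (i.e. two of the vectors form an acute angle). -/
/-- Let `V` be a finite-dimensional real inner product space, `f : V → ℝ` a linear
functional, and `v_1, …, v_m ∈ V` vectors with `f(v_i) > 0` for all `i`. If the
family `(v_1, …, v_m)` is linearly dependent over `ℝ`, then two of the vectors form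
an acute angle, i.e. `⟪v_i, v_j⟫ > 0` for some `i ≠ j`. -/
theorem stmt19 {V : Type} [NormedAddCommGroup V] [InnerProductSpace ℝ V]
    [FiniteDimensional ℝ V] (f : V →ₗ[ℝ] ℝ) (m : ℕ) (v : Fin m → V)
    (hf : ∀ i, 0 < f (v i)) (hdep : ¬ LinearIndependent ℝ v) :
    ∃ i j, i ≠ j ∧ 0 < (inner ℝ (v i) (v j) : ℝ) := by
  rw [Fintype.not_linearIndependent_iff] at hdep
  obtain ⟨g, hsum, i₀, hi₀⟩ := hdep
  set gp : Fin m → ℝ := fun i => max (g i) 0 with hgp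
  set gn : Fin m → ℝ := fun i => max (-g i) 0 with hgn
  have hgpn : ∀ i, gp i - gn i = g i := by
    intro i
    simp only [hgp, hgn]
    rcases le_total (g i) 0 with h | h
    · rw [max_eq_right h, max_eq_left (neg_nonneg.mpr h)]; ring
    · rw [max_eq_left h, max_eq_right (neg_nonpos.mpr h)]; ring
  have hgp0 : ∀ i, 0 ≤ gp i := fun i => le_max_right _ _
  have hgn0 : ∀ i, 0 ≤ gn i := fun i => le_max_right _ _
  have hmul0 : ∀ i, gp i * gn i = 0 := by
    intro i
    rcases le_total (g i) 0 with h | h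
    · simp [hgp, max_eq_right h]
    · simp [hgn, max_eq_right (neg_nonpos.mpr h)]
  set w : V := ∑ i, gp i • v i with hw
  have hw2 : w = ∑ i, gn i • v i := by
    have h0 : w - ∑ i, gn i • v i = 0 := by
      rw [hw, ← Finset.sum_sub_distrib]
      simp_rw [← sub_smul, hgpn]
      exact hsum
    exact sub_eq_zero.mp h0
  -- w ≠ 0
  have hwne : w ≠ 0 := by
    intro h0
    -- f w = ∑ gp i * f (v i) = 0, all terms nonneg
    have hfw : ∑ i, gp i * f (v i) = 0 := by
      have := congrArg f h0
      simpa [hw, map_sum, map_smul, smul_eq_mul] using this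
    have hp : ∀ i, gp i = 0 := by
      intro i
      have hterm : ∀ j ∈ Finset.univ, (0:ℝ) ≤ gp j * f (v j) :=
        fun j _ => mul_nonneg (hgp0 j) (hf j).le
      have := (Finset.sum_eq_zero_iff_of_nonneg hterm).mp hfw i (Finset.mem_univ i)
      exact (mul_eq_zero.mp this).resolve_right (ne_of_gt (hf i))
    have hfw2 : ∑ i, gn i * f (v i) = 0 := by
      have := congrArg f (hw2.symm.trans h0)
      simpa [map_sum, map_smul, smul_eq_mul] using this
    have hn : ∀ i, gn i = 0 := by
      intro i
      have hterm : ∀ j ∈ Finset.univ, (0:ℝ) ≤ gn j * f (v j) :=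
        fun j _ => mul_nonneg (hgn0 j) (hf j).le
      have := (Finset.sum_eq_zero_iff_of_nonneg hterm).mp hfw2 i (Finset.mem_univ i)
      exact (mul_eq_zero.mp this).resolve_right (ne_of_gt (hf i))
    apply hi₀
    rw [← hgpn i₀, hp i₀, hn i₀, sub_zero]
  have hww : (0:ℝ) < inner ℝ w w :=
    real_inner_self_nonneg.lt_of_ne fun h => hwne (inner_self_eq_zero.mp h.symm)
  have hexp : (inner ℝ w w : ℝ) = ∑ i, ∑ j, gp i * gn j * inner ℝ (v i) (v j) := by
    nth_rewrite 1 [hw]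
    rw [hw2, sum_inner]
    congr 1; ext i
    rw [inner_sum]
    congr 1; ext j
    rw [real_inner_smul_left, real_inner_smul_right]
    ring
  by_contra hcon
  push_neg at hcon
  have hle : (inner ℝ w w : ℝ) ≤ 0 := by
    rw [hexp]
    apply Finset.sum_nonpos
    intro i _
    apply Finset.sum_nonpos
    intro j _
    rcases eq_or_ne i j with rfl | hij
    · rw [hmul0 i]; simp
    · have h1 : (inner ℝ (v i) (v j) : ℝ) ≤ 0 := hcon i j hij
      have h2 : 0 ≤ gp i * gn j := mul_nonneg (hgp0 i) (hgn0 j)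
      exact mul_nonpos_of_nonneg_of_nonpos h2 h1
  linarith
end
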